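/- Let G = H □_{F₁,…,F_t} K₂^{□t} and let (G,p,ℓ) be a point-hyperplane framework in ℝ^d with t-fold extrusion symmetry with extrusion directions τ₁,…,τ_t, with extrusion action θ: ℤ₂^t → Aut(G). Suppose there is no edge {i,j} ∈ E_PH for which the hyperplane corresponding to j contains an extrusion direction. Then the point-hyperplane rigidity matrix R(G,p,ℓ) is a ℤ₂^t-linear map of the external representation P′_V and the internal representation P′_E, i.e. R(G,p,ℓ)·P′_V(γ) = P′_E(γ)·R(G,p,ℓ) for all γ ∈ ℤ₂^t. -/
import Mathlib


/-!
STATEMENT 4: Let `G = H □_{F₁,…,F_t} K₂^{□t}` and let `(G,p,ℓ)` be a point-hyperplane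
framework in `ℝ^d` with `t`-fold extrusion symmetry with extrusion directions
`τ₁,…,τ_t`.  Suppose no edge of `E_PH` has its hyperplane endpoint containing an
extrusion direction.  Then the point-hyperplane rigidity matrix intertwines the
external representation `P′_V` and the internal representation `P′_E`:
`R(G,p,ℓ)·P′_V(γ) = P′_E(γ)·R(G,p,ℓ)` for all `γ ∈ ℤ₂^t`.  This is expressed
row-wise: applying `R` to `P′_V(γ) q` at a row equals the sign attached by `P′_E(γ)` to
that row times the value of `R q` at the `γ`-image of the row.
-/

open Matrix
open scoped Classical

/-- The group `ℤ₂^t`. -/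
abbrev Zkt (t : ℕ) := Fin t → ZMod 2

/-- Configuration space of a point-hyperplane framework in `ℝ^d`. -/
abbrev PHCfg (d : ℕ) (VP VH : Type*) := (VP → Fin d → ℝ) × (VH → (Fin d → ℝ) × ℝ)

/-- Point vertices of `G = H □_{F₁,…,F_t} K₂^{□t}`: pairs `(v, 𝐞)` with `v` a point
vertex of `H` and `𝐞 ∈ {0,1}^t`. -/
abbrev VPt (VPH : Type*) (t : ℕ) := VPH × Zkt t

/-- Hyperplane vertices of `G = H □_{F₁,…,F_t} K₂^{□t}`: pairs `(w, 𝐞)`, where the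
coordinates `h` of `𝐞` with `w ∈ F_h` are "starred" (immaterial: all notions below are
invariant under changing them, which models the contraction of such pairs). -/
abbrev VHt (VHH : Type*) (t : ℕ) := VHH × Zkt t

/-- The extrusion action on point vertices. -/
def thetaP {VPH : Type*} {t : ℕ} (γ : Zkt t) (i : VPt VPH t) : VPt VPH t := (i.1, i.2 + γ)

/-- The extrusion action on hyperplane vertices (`⋆ + 0 = ⋆ + 1 = ⋆` is modelled by
invariance under the starred coordinates). -/
def thetaH {VHH : Type*} {t : ℕ} (γ : Zkt t) (j : VHt VHH t) : VHt VHH t := (j.1, j.2 + γ)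

/-- Coefficient of `τ_h` in the extrusion direction induced by `γ` at level `e`:
`+1` if `e_h = 0, γ_h = 1`; `-1` if `e_h = 1, γ_h = 1`; `0` if `γ_h = 0`. -/
noncomputable def coef (e g : ZMod 2) : ℝ := (1 - 2 * (e.val : ℝ)) * ((g.val : ℝ))

/-- The extrusion direction `τ_γ(i)` of a point vertex `i` induced by `γ`. -/
noncomputable def tauP {VPH : Type*} {t d : ℕ} (τ : Fin t → Fin d → ℝ) (γ : Zkt t)
    (i : VPt VPH t) : Fin d → ℝ :=
  ∑ h, coef (i.2 h) (γ h) • τ h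

/-- The extrusion direction `τ_γ(j)` of a hyperplane vertex `j` induced by `γ`
(starred coordinates, i.e. those `h` with `j ∈ F_h`, contribute nothing). -/
noncomputable def tauH {VHH : Type*} {t d : ℕ} (F : Fin t → VHH → Prop)
    (τ : Fin t → Fin d → ℝ) (γ : Zkt t) (j : VHt VHH t) : Fin d → ℝ :=
  ∑ h, if F h j.1 then 0 else coef (j.2 h) (γ h) • τ h

/-- Definition 3.1: `t`-fold extrusion symmetry of a point-hyperplane framework on
`G = H □_{F₁,…,F_t} K₂^{□t}` with extrusion directions `τ₁,…,τ_t ∈ ℝ^d \ {0}`: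
(i) points are translated by the induced extrusion directions, (ii) hyperplane normals
are preserved, (iii) `τ_h` lies in the hyperplane of `(w,𝐞)` iff `w ∈ F_h`,
(iv) the offsets transform by `r_{θ(γ)j} = r_j + ⟨a_j, τ_γ(j)⟩`. -/
def PHExtrusion {VPH VHH : Type*} {t d : ℕ} (F : Fin t → VHH → Prop)
    (τ : Fin t → Fin d → ℝ) (c : PHCfg d (VPt VPH t) (VHt VHH t)) : Prop :=
  (∀ h, τ h ≠ 0) ∧
  (∀ (γ : Zkt t) (i : VPt VPH t), c.1 (thetaP γ i) = c.1 i + tauP τ γ i) ∧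
  (∀ (γ : Zkt t) (j : VHt VHH t), (c.2 (thetaH γ j)).1 = (c.2 j).1) ∧
  (∀ (j : VHt VHH t) (h : Fin t), τ h ⬝ᵥ (c.2 j).1 = 0 ↔ F h j.1) ∧
  (∀ (γ : Zkt t) (j : VHt VHH t),
    (c.2 (thetaH γ j)).2 = (c.2 j).2 + (c.2 j).1 ⬝ᵥ tauH F τ γ j)

/-- Point-point adjacency in `G`. -/
def AdjPP {VPH : Type*} {t : ℕ} (hPP : VPH → VPH → Prop) (i j : VPt VPH t) : Prop :=
  (hPP i.1 j.1 ∧ i.2 = j.2) ∨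
    (i.1 = j.1 ∧ ∃ h, i.2 h ≠ j.2 h ∧ ∀ h', h' ≠ h → i.2 h' = j.2 h')

/-- Point-hyperplane adjacency in `G`: the levels must agree on all non-starred
coordinates of the hyperplane vertex. -/
def AdjPH {VPH VHH : Type*} {t : ℕ} (F : Fin t → VHH → Prop)
    (hPH : VPH → VHH → Prop) (i : VPt VPH t) (j : VHt VHH t) : Prop :=
  hPH i.1 j.1 ∧ ∀ h, ¬ F h j.1 → i.2 h = j.2 h

/-- Hyperplane-hyperplane (non-parallel, i.e. angle-constraint) adjacency in `G`,
inherited from the edges of `H`: the levels must agree on coordinates that are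
non-starred for both endpoints. -/
def AdjHHn {VHH : Type*} {t : ℕ} (F : Fin t → VHH → Prop)
    (hHH : VHH → VHH → Prop) (j k : VHt VHH t) : Prop :=
  hHH j.1 k.1 ∧ ∀ h, ¬ F h j.1 → ¬ F h k.1 → j.2 h = k.2 h

/-- Hyperplane-hyperplane parallel adjacency in `G`: two copies of the same hyperplane
vertex of `H` whose levels differ in exactly one non-starred coordinate. -/
def AdjHHp {VHH : Type*} {t : ℕ} (F : Fin t → VHH → Prop) (j k : VHt VHH t) : Prop :=
  j.1 = k.1 ∧ ∃ h, ¬ F h j.1 ∧ j.2 h ≠ k.2 h ∧ ∀ h', h' ≠ h → j.2 h' = k.2 h'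

/-- The external representation `P′_V = (P_{V_P} ⊗ I_d) ⊕ P′_{V_H}` of `ℤ₂^t` acting on
the configuration space: point velocities are permuted, and for a hyperplane vertex `j`
the block `[[I_d, 0], [−τ_γ(j)ᵀ, 1]]` is applied to the permuted `(ȧ, ṙ)`. -/
noncomputable def extActP {VPH VHH : Type*} {t d : ℕ} (F : Fin t → VHH → Prop)
    (τ : Fin t → Fin d → ℝ) (γ : Zkt t) (q : PHCfg d (VPt VPH t) (VHt VHH t)) :
    PHCfg d (VPt VPH t) (VHt VHH t) :=
  (fun i => q.1 (thetaP γ i),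
   fun j => ((q.2 (thetaH γ j)).1,
     (q.2 (thetaH γ j)).2 - tauH F τ γ j ⬝ᵥ (q.2 (thetaH γ j)).1))

/-- The orientation sign of a level entry: `+1` for `0` and `-1` for `1`. -/
noncomputable def sgn (e : ZMod 2) : ℝ := 1 - 2 * (e.val : ℝ)

/-- Row indices of the point-hyperplane rigidity matrix of `G`:
point-point rows, point-hyperplane rows, hyperplane-hyperplane angle rows,
`d−1` rows per parallel-constraint edge, and one normalisation row per hyperplane
vertex. -/
abbrev PRow (VP VH : Type*) (d : ℕ) :=
  (VP × VP) ⊕ (VP × VH) ⊕ (VH × VH) ⊕ ((VH × VH) × Fin (d - 1)) ⊕ VH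

/-- The point-hyperplane rigidity matrix of the extrusion-symmetric framework, applied
to a candidate infinitesimal motion `q`.  The `d−1` rows of a parallel-constraint edge
`{j,k}` (in direction `h`, with vectors `alph j.1 h m` as in Section 3.2) carry `(α,0)`
in the columns of the endpoint whose `h`-th level entry is `0` and `(−α,0)` in the
columns of the other endpoint. -/
noncomputable def phRigX {VPH VHH : Type*} {t d : ℕ} (F : Fin t → VHH → Prop)
    (hPP : VPH → VPH → Prop) (hPH : VPH → VHH → Prop) (hHH : VHH → VHH → Prop)
    (alph : VHH → Fin t → Fin (d - 1) → Fin d → ℝ)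
    (c q : PHCfg d (VPt VPH t) (VHt VHH t)) :
    PRow (VPt VPH t) (VHt VHH t) d → ℝ
  | Sum.inl (i, j) =>
      if AdjPP hPP i j then (c.1 i - c.1 j) ⬝ᵥ (q.1 i - q.1 j) else 0
  | Sum.inr (Sum.inl (i, j)) =>
      if AdjPH F hPH i j then
        c.1 i ⬝ᵥ (q.2 j).1 + q.1 i ⬝ᵥ (c.2 j).1 - (q.2 j).2
      else 0
  | Sum.inr (Sum.inr (Sum.inl (j, k))) =>
      if AdjHHn F hHH j k then
        (c.2 j).1 ⬝ᵥ (q.2 k).1 + (q.2 j).1 ⬝ᵥ (c.2 k).1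
      else 0
  | Sum.inr (Sum.inr (Sum.inr (Sum.inl ((j, k), m)))) =>
      if AdjHHp F j k then
        ∑ h, (if ¬ F h j.1 ∧ j.2 h ≠ k.2 h then
            sgn (j.2 h) * (alph j.1 h m ⬝ᵥ (q.2 j).1)
              + sgn (k.2 h) * (alph j.1 h m ⬝ᵥ (q.2 k).1)
          else 0)
      else 0
  | Sum.inr (Sum.inr (Sum.inr (Sum.inr j))) => (c.2 j).1 ⬝ᵥ (q.2 j).1

/-- The sign of the internal representation attached to a pair of levels `e, e'`:
`-1` exactly when the two levels differ in a single coordinate `h` and `γ_h = 1`. -/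
noncomputable def intSign {t : ℕ} (γ : Zkt t) (e e' : Zkt t) : ℝ :=
  ∏ h, (-1 : ℝ) ^ ((e h + e' h).val * (γ h).val)

/-- The permutation of the rows induced by `γ` (acting on each vertex index). -/
def rowMap {VPH VHH : Type*} {t d : ℕ} (γ : Zkt t) :
    PRow (VPt VPH t) (VHt VHH t) d → PRow (VPt VPH t) (VHt VHH t) d
  | Sum.inl (i, j) => Sum.inl (thetaP γ i, thetaP γ j)
  | Sum.inr (Sum.inl (i, j)) => Sum.inr (Sum.inl (thetaP γ i, thetaH γ j))
  | Sum.inr (Sum.inr (Sum.inl (j, k))) =>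
      Sum.inr (Sum.inr (Sum.inl (thetaH γ j, thetaH γ k)))
  | Sum.inr (Sum.inr (Sum.inr (Sum.inl ((j, k), m)))) =>
      Sum.inr (Sum.inr (Sum.inr (Sum.inl ((thetaH γ j, thetaH γ k), m))))
  | Sum.inr (Sum.inr (Sum.inr (Sum.inr j))) =>
      Sum.inr (Sum.inr (Sum.inr (Sum.inr (thetaH γ j))))

/-- The sign of the internal representation
`P′_E = P′_{E_PP} ⊕ P_{E_PH} ⊕ P_{E_HH∦} ⊕ (P′_{E_HH∥} ⊗ I_{d−1}) ⊕ P_{V_H}` on each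
row: the signed edge permutation sign on point-point and parallel rows, `+1` on the
point-hyperplane, angle and normalisation rows. -/
noncomputable def rowSign {VPH VHH : Type*} {t d : ℕ} (γ : Zkt t) :
    PRow (VPt VPH t) (VHt VHH t) d → ℝ
  | Sum.inl (i, j) => intSign γ i.2 j.2
  | Sum.inr (Sum.inl _) => 1
  | Sum.inr (Sum.inr (Sum.inl _)) => 1
  | Sum.inr (Sum.inr (Sum.inr (Sum.inl ((j, k), _)))) => intSign γ j.2 k.2
  | Sum.inr (Sum.inr (Sum.inr (Sum.inr _))) => 1

/-! ### Auxiliary lemmas -/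

lemma zmod2_cases : ∀ e : ZMod 2, e = 0 ∨ e = 1 := by decide

lemma zmod2_add_self (a : ZMod 2) : a + a = 0 := by revert a; decide

lemma zmod2_add_of_ne : ∀ a b : ZMod 2, a ≠ b → a + b = 1 := by decide

lemma zmod2_succ_of_ne : ∀ a b : ZMod 2, a ≠ b → a + 1 = b := by decide

lemma sgn_eq_coef_one (e : ZMod 2) : coef e 1 = sgn e := by
  simp [coef, sgn, ZMod.val_one]

lemma coef_zero_right (e : ZMod 2) : coef e 0 = 0 := by
  simp [coef]

lemma sgn_eq (a g : ZMod 2) : sgn a = (-1 : ℝ) ^ (g.val) * sgn (a + g) := by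
  rcases zmod2_cases a with ha | ha <;> rcases zmod2_cases g with hg | hg <;>
    subst ha <;> subst hg
  · norm_num [sgn]
  · rw [show (0 + 1 : ZMod 2) = 1 from by decide]
    norm_num [sgn, ZMod.val_zero, ZMod.val_one]
  · norm_num [sgn]
  · rw [show (1 + 1 : ZMod 2) = 0 from by decide]
    norm_num [sgn, ZMod.val_zero, ZMod.val_one]

lemma intSign_refl {t : ℕ} (γ e : Zkt t) : intSign γ e e = 1 := by
  unfold intSign
  apply Finset.prod_eq_one
  intro h _
  rw [zmod2_add_self]
  simp

lemma intSign_single {t : ℕ} (γ e e' : Zkt t) (h0 : Fin t)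
    (hne : e h0 ≠ e' h0) (heq : ∀ h, h ≠ h0 → e h = e' h) :
    intSign γ e e' = (-1 : ℝ) ^ (γ h0).val := by
  unfold intSign
  rw [Finset.prod_eq_single h0]
  · rw [zmod2_add_of_ne _ _ hne, ZMod.val_one, one_mul]
  · intro h _ hne'
    rw [heq h hne', zmod2_add_self]
    simp
  · intro h; exact absurd (Finset.mem_univ h0) h

section AuxMain

variable {VPH VHH : Type*} {t d : ℕ}

lemma tauP_congr (τ : Fin t → Fin d → ℝ) (γ : Zkt t) (i j : VPt VPH t)
    (h : i.2 = j.2) : tauP τ γ i = tauP τ γ j := by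
  unfold tauP; rw [h]

lemma tauP_single (τ : Fin t → Fin d → ℝ) (h0 : Fin t) (i : VPt VPH t) :
    tauP τ (fun h => if h = h0 then 1 else 0) i = sgn (i.2 h0) • τ h0 := by
  unfold tauP
  rw [Finset.sum_eq_single h0]
  · simp [sgn_eq_coef_one]
  · intro h _ hne
    simp [hne, coef_zero_right]
  · intro h; exact absurd (Finset.mem_univ h0) h

lemma flip_diff (τ : Fin t → Fin d → ℝ) (c : PHCfg d (VPt VPH t) (VHt VHH t))
    (hp : ∀ (γ : Zkt t) (i : VPt VPH t), c.1 (thetaP γ i) = c.1 i + tauP τ γ i)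
    (i j : VPt VPH t) (h0 : Fin t) (h1 : i.1 = j.1)
    (hne : i.2 h0 ≠ j.2 h0) (heq : ∀ h, h ≠ h0 → i.2 h = j.2 h) :
    c.1 i - c.1 j = (-(sgn (i.2 h0))) • τ h0 := by
  have hj : thetaP (fun h => if h = h0 then 1 else 0) i = j := by
    unfold thetaP
    refine Prod.ext h1 (funext fun h => ?_)
    by_cases hh : h = h0
    · subst hh
      simpa using zmod2_succ_of_ne _ _ hne
    · simpa [hh] using heq h hh
  rw [← hj, hp, tauP_single, neg_smul]
  abel

lemma adjPP_theta (hPP : VPH → VPH → Prop) (γ : Zkt t) (i j : VPt VPH t) :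
    AdjPP hPP (thetaP γ i) (thetaP γ j) ↔ AdjPP hPP i j := by
  simp only [AdjPP, thetaP, Pi.add_apply, add_left_inj, ne_eq]

lemma adjPH_theta (F : Fin t → VHH → Prop) (hPH : VPH → VHH → Prop) (γ : Zkt t)
    (i : VPt VPH t) (j : VHt VHH t) :
    AdjPH F hPH (thetaP γ i) (thetaH γ j) ↔ AdjPH F hPH i j := by
  simp only [AdjPH, thetaP, thetaH, Pi.add_apply, add_left_inj]

lemma adjHHn_theta (F : Fin t → VHH → Prop) (hHH : VHH → VHH → Prop) (γ : Zkt t)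
    (j k : VHt VHH t) :
    AdjHHn F hHH (thetaH γ j) (thetaH γ k) ↔ AdjHHn F hHH j k := by
  simp only [AdjHHn, thetaH, Pi.add_apply, add_left_inj]

lemma adjHHp_theta (F : Fin t → VHH → Prop) (γ : Zkt t) (j k : VHt VHH t) :
    AdjHHp F (thetaH γ j) (thetaH γ k) ↔ AdjHHp F j k := by
  simp only [AdjHHp, thetaH, Pi.add_apply, add_left_inj, ne_eq]

lemma tauH_eq_tauP (F : Fin t → VHH → Prop) (τ : Fin t → Fin d → ℝ) (γ : Zkt t)
    (i : VPt VPH t) (j : VHt VHH t)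
    (hF : ∀ h, ¬ F h j.1) (he : ∀ h, i.2 h = j.2 h) :
    tauH F τ γ j = tauP τ γ i := by
  unfold tauH tauP
  refine Finset.sum_congr rfl fun h _ => ?_
  rw [if_neg (hF h), he h]

end AuxMain

/-- **Theorem 3.2**: the point-hyperplane rigidity matrix of a `t`-fold
extrusion-symmetric framework is a `ℤ₂^t`-linear map of the external representation
`P′_V` and the internal representation `P′_E`, provided no point-hyperplane edge
involves a hyperplane containing an extrusion direction. -/
theorem ph_rigidity_intertwines
    {VPH VHH : Type*} [Fintype VPH] [Fintype VHH] {t d : ℕ}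
    (F : Fin t → VHH → Prop) (τ : Fin t → Fin d → ℝ)
    (hPP : VPH → VPH → Prop) (hPPsymm : ∀ u v, hPP u v → hPP v u)
    (hPH : VPH → VHH → Prop)
    (hHH : VHH → VHH → Prop) (hHHsymm : ∀ u v, hHH u v → hHH v u)
    (alph : VHH → Fin t → Fin (d - 1) → Fin d → ℝ)
    (c : PHCfg d (VPt VPH t) (VHt VHH t))
    (hext : PHExtrusion F τ c)
    (hnoPH : ∀ (i : VPt VPH t) (j : VHt VHH t), AdjPH F hPH i j → ∀ h, ¬ F h j.1) :
    ∀ (γ : Zkt t) (q : PHCfg d (VPt VPH t) (VHt VHH t))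
      (row : PRow (VPt VPH t) (VHt VHH t) d),
      phRigX F hPP hPH hHH alph c (extActP F τ γ q) row
        = rowSign γ row * phRigX F hPP hPH hHH alph c q (rowMap γ row) := by
  obtain ⟨hτ, hp, ha, hperp, hr⟩ := hext
  intro γ q row
  rcases row with ⟨i, j⟩ | ⟨i, j⟩ | ⟨j, k⟩ | ⟨⟨j, k⟩, m⟩ | j
  · -- point-point rows
    simp only [phRigX, rowMap, rowSign, extActP]
    by_cases hA : AdjPP hPP i j
    · rw [if_pos hA, if_pos ((adjPP_theta hPP γ i j).mpr hA)]
      rcases hA with ⟨-, he⟩ | ⟨h1, h0, hne, heq⟩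
      · rw [he, intSign_refl, one_mul]
        have hd : c.1 (thetaP γ i) - c.1 (thetaP γ j) = c.1 i - c.1 j := by
          rw [hp γ i, hp γ j, tauP_congr τ γ i j he]
          abel
        rw [hd]
      · have hd1 : c.1 i - c.1 j = (-(sgn (i.2 h0))) • τ h0 :=
          flip_diff τ c hp i j h0 h1 hne heq
        have hne' : (thetaP γ i).2 h0 ≠ (thetaP γ j).2 h0 := by
          show i.2 h0 + γ h0 ≠ j.2 h0 + γ h0
          exact fun hcon => hne (add_right_cancel hcon)
        have heq' : ∀ h, h ≠ h0 → (thetaP γ i).2 h = (thetaP γ j).2 h := by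
          intro h hh
          show i.2 h + γ h = j.2 h + γ h
          rw [heq h hh]
        have hd2 : c.1 (thetaP γ i) - c.1 (thetaP γ j)
            = (-(sgn (i.2 h0 + γ h0))) • τ h0 :=
          flip_diff τ c hp (thetaP γ i) (thetaP γ j) h0 h1 hne' heq'
        rw [intSign_single γ i.2 j.2 h0 hne heq, hd1, hd2,
          sgn_eq (i.2 h0) (γ h0), smul_dotProduct, smul_dotProduct,
          smul_eq_mul, smul_eq_mul]
        ring
    · rw [if_neg hA, if_neg (fun hcon => hA ((adjPP_theta hPP γ i j).mp hcon)),
        mul_zero]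
  · -- point-hyperplane rows
    simp only [phRigX, rowMap, rowSign, extActP, one_mul]
    by_cases hA : AdjPH F hPH i j
    · rw [if_pos hA, if_pos ((adjPH_theta F hPH γ i j).mpr hA)]
      have hF : ∀ h, ¬ F h j.1 := hnoPH i j hA
      have he : ∀ h, i.2 h = j.2 h := fun h => hA.2 h (hF h)
      rw [hp γ i, ha γ j, tauH_eq_tauP F τ γ i j hF he, add_dotProduct]
      ring
    · rw [if_neg hA, if_neg (fun hcon => hA ((adjPH_theta F hPH γ i j).mp hcon))]
  · -- hyperplane-hyperplane angle rows
    simp only [phRigX, rowMap, rowSign, extActP, one_mul]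
    by_cases hA : AdjHHn F hHH j k
    · rw [if_pos hA, if_pos ((adjHHn_theta F hHH γ j k).mpr hA), ha γ j, ha γ k]
    · rw [if_neg hA, if_neg (fun hcon => hA ((adjHHn_theta F hHH γ j k).mp hcon))]
  · -- parallel rows
    simp only [phRigX, rowMap, rowSign, extActP]
    by_cases hA : AdjHHp F j k
    · rw [if_pos hA, if_pos ((adjHHp_theta F γ j k).mpr hA)]
      obtain ⟨h1, h0, hF0, hne, heq⟩ := hA
      rw [intSign_single γ j.2 k.2 h0 hne heq, Finset.mul_sum]
      refine Finset.sum_congr rfl fun h _ => ?_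
      by_cases hh : h = h0
      · subst hh
        have hne' : (thetaH γ j).2 h ≠ (thetaH γ k).2 h := by
          show j.2 h + γ h ≠ k.2 h + γ h
          exact fun hcon => hne (add_right_cancel hcon)
        rw [if_pos ⟨hF0, hne⟩, if_pos ⟨hF0, hne'⟩]
        show sgn (j.2 h) * _ + sgn (k.2 h) * _
          = (-1 : ℝ) ^ (γ h).val * (sgn (j.2 h + γ h) * _ + sgn (k.2 h + γ h) * _)
        rw [sgn_eq (j.2 h) (γ h), sgn_eq (k.2 h) (γ h)]
        simp only [thetaH]
        ring
      · have he : j.2 h = k.2 h := heq h hh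
        have he' : (thetaH γ j).2 h = (thetaH γ k).2 h := by
          show j.2 h + γ h = k.2 h + γ h
          rw [he]
        rw [if_neg (fun hcon => hcon.2 he), if_neg (fun hcon => hcon.2 he'),
          mul_zero]
    · rw [if_neg hA, if_neg (fun hcon => hA ((adjHHp_theta F γ j k).mp hcon)),
        mul_zero]
  · -- normalisation rows
    simp only [phRigX, rowMap, rowSign, extActP, one_mul]
    rw [ha γ j]
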